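/- Let (M_t)_{t≥0} be a martingale with continuous paths on a filtered probability space, with M_0 = 0 almost surely, which converges almost surely as t → ∞ to a limit M_∞ whose law is μ. Then for every λ > 0: P(sup_{t≥0} M_t ≥ λ) ≥ μ₊(λ) and P(-inf_{t≥0} M_t ≥ λ) ≥ μ₋(λ). -/

import Mathlib

open MeasureTheory Set Filter
open scoped ENNReal NNReal Classical

/-- The function `c` of the paper: `c x = ∫_{[0,∞)} min(x,u) μ(du)` for `x ≥ 0`,
`c x = ∫_{(-∞,0)} min(|x|,|u|) μ(du)` for `x < 0`. -/
noncomputable def cfun (μ : Measure ℝ) (x : ℝ) : ℝ :=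
  if 0 ≤ x then ∫ u in Ici (0 : ℝ), min x u ∂μ
  else ∫ u in Iio (0 : ℝ), min |x| |u| ∂μ

/-- The slope `(c(λ) - c(-x))/(λ + x)` appearing in the definition of `θ₊, γ₊`. -/
noncomputable def slopePlus (μ : Measure ℝ) (l x : ℝ) : ℝ :=
  (cfun μ l - cfun μ (-x)) / (l + x)

/-- The slope `(c(x) - c(-λ))/(x + λ)` appearing in the definition of `θ₋, γ₋`. -/
noncomputable def slopeMinus (μ : Measure ℝ) (l x : ℝ) : ℝ :=
  (cfun μ x - cfun μ (-l)) / (x + l)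

/-- The set of `x > 0` attaining the infimum in the definition of `γ₊(λ)`. -/
def argminPlus (μ : Measure ℝ) (l : ℝ) : Set ℝ :=
  {x | 0 < x ∧ ∀ y, 0 < y → slopePlus μ l x ≤ slopePlus μ l y}

/-- The set of `x > 0` attaining the supremum in the definition of `γ₋(λ)`. -/
def argmaxMinus (μ : Measure ℝ) (l : ℝ) : Set ℝ :=
  {x | 0 < x ∧ ∀ y, 0 < y → slopeMinus μ l y ≤ slopeMinus μ l x}

/-- `θ₊(λ) = -inf_{x>0} (c(λ)-c(-x))/(λ+x)` if the infimum is attained, `0` otherwise. -/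
noncomputable def thetaPlus (μ : Measure ℝ) (l : ℝ) : ℝ :=
  if (argminPlus μ l).Nonempty then -sInf (slopePlus μ l '' Ioi 0) else 0

/-- `θ₋(λ) = sup_{x>0} (c(x)-c(-λ))/(x+λ)` if the supremum is attained, `0` otherwise. -/
noncomputable def thetaMinus (μ : Measure ℝ) (l : ℝ) : ℝ :=
  if (argmaxMinus μ l).Nonempty then sSup (slopeMinus μ l '' Ioi 0) else 0

/-- `γ₊(λ)`: the smallest minimiser if the infimum is attained, `∞ = ⊤` otherwise. -/
noncomputable def gammaPlus (μ : Measure ℝ) (l : ℝ) : EReal :=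
  if (argminPlus μ l).Nonempty then ((sInf (argminPlus μ l) : ℝ) : EReal) else ⊤

/-- `γ₋(λ)`: the smallest maximiser if the supremum is attained, `∞ = ⊤` otherwise. -/
noncomputable def gammaMinus (μ : Measure ℝ) (l : ℝ) : EReal :=
  if (argmaxMinus μ l).Nonempty then ((sInf (argmaxMinus μ l) : ℝ) : EReal) else ⊤

/-- `μ₊(λ) = θ₊(λ) + μ([λ,∞))`. -/
noncomputable def muPlus (μ : Measure ℝ) (l : ℝ) : ℝ :=
  thetaPlus μ l + (μ (Ici l)).toReal

/-- `μ₋(λ) = μ((-∞,-λ]) + θ₋(λ)`. -/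
noncomputable def muMinus (μ : Measure ℝ) (l : ℝ) : ℝ :=
  (μ (Iic (-l))).toReal + thetaMinus μ l


section
variable {Ω : Type*} {mΩ : MeasurableSpace Ω} {P : Measure Ω} [IsProbabilityMeasure P]
  {F : Filtration ℝ≥0 mΩ} {M : ℝ≥0 → Ω → ℝ}

/-- barrier set -/
def mybarrier (x l : ℝ) : Set ℝ := Iic (-x) ∪ Ici l

lemma mybarrier_closed (x l : ℝ) : IsClosed (mybarrier x l) :=
  isClosed_Iic.union isClosed_Ici

lemma mem_mybarrier {x l v : ℝ} : v ∈ mybarrier x l ↔ v ≤ -x ∨ l ≤ v := Iff.rfl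

lemma not_mem_mybarrier {x l v : ℝ} : v ∉ mybarrier x l ↔ -x < v ∧ v < l := by
  simp [mybarrier, not_or, not_le, and_comm]

/-- stopped-at-horizon hitting time -/
noncomputable def myrho (M : ℝ≥0 → Ω → ℝ) (x l : ℝ) (T : ℝ≥0) (ω : Ω) : ℝ≥0 :=
  sInf ({t | M t ω ∈ mybarrier x l} ∩ Iic T ∪ {T})

variable {x l : ℝ} {T : ℝ≥0} {ω : Ω}

lemma myrho_mem (hω : Continuous fun t => M t ω) :
    myrho M x l T ω ∈ ({t | M t ω ∈ mybarrier x l} ∩ Iic T ∪ {T}) := by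
  refine IsClosed.csInf_mem ?_ ⟨T, by simp⟩ (OrderBot.bddBelow _)
  exact (((mybarrier_closed x l).preimage hω).inter isClosed_Iic).union isClosed_singleton

lemma myrho_le : myrho M x l T ω ≤ T :=
  csInf_le (OrderBot.bddBelow _) (by simp)

lemma not_mem_of_lt_myrho {s : ℝ≥0} (hs : s < myrho M x l T ω) : M s ω ∉ mybarrier x l := by
  intro hmem
  have h2 : myrho M x l T ω ≤ s :=
    csInf_le (OrderBot.bddBelow _) (Set.mem_union_left _ ⟨hmem, hs.le.trans myrho_le⟩)
  exact absurd hs (not_lt.2 h2)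
end

open scoped Topology

section
variable {Ω : Type*} {mΩ : MeasurableSpace Ω} {P : Measure Ω} [IsProbabilityMeasure P]
  {F : Filtration ℝ≥0 mΩ} {M : ℝ≥0 → Ω → ℝ} {x l : ℝ} {T : ℝ≥0} {ω : Ω}

lemma mybarrier_nonempty (x l : ℝ) : (mybarrier x l).Nonempty :=
  ⟨l, Or.inr (mem_Ici.2 le_rfl)⟩

lemma myrho_val_mem (hω : Continuous fun t => M t ω) (h0 : M 0 ω = 0)
    (hx : 0 < x) (hl : 0 < l) : M (myrho M x l T ω) ω ∈ Icc (-x) l := by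
  rcases eq_or_ne (myrho M x l T ω) 0 with h | h
  · rw [h, h0]; exact ⟨by linarith, hl.le⟩
  · have hpos : 0 < myrho M x l T ω := zero_lt_iff.2 h
    have hne : NeBot (𝓝[Iio (myrho M x l T ω)] (myrho M x l T ω)) :=
      nhdsWithin_Iio_self_neBot' ⟨0, hpos⟩
    have htd : Tendsto (fun s => M s ω) (𝓝[Iio (myrho M x l T ω)] (myrho M x l T ω))
        (𝓝 (M (myrho M x l T ω) ω)) := (hω.tendsto _).mono_left nhdsWithin_le_nhds
    refine isClosed_Icc.mem_of_tendsto htd ?_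
    refine eventually_nhdsWithin_of_forall fun s hs => ?_
    have h2 := not_mem_mybarrier.1 (not_mem_of_lt_myrho hs)
    exact ⟨h2.1.le, h2.2.le⟩

lemma measurable_hit_event (hadp : StronglyAdapted F M) (hcont : ∀ ω, Continuous fun t => M t ω)
    (t : ℝ≥0) : MeasurableSet[F t] {ω | ∃ s ≤ t, M s ω ∈ mybarrier x l} := by
  obtain ⟨D, hDc, hDd⟩ := TopologicalSpace.exists_countable_dense ℝ≥0
  set Q : Set ℝ≥0 := insert t (D ∩ Iio t) with hQ
  have hQc : Q.Countable := (hDc.mono inter_subset_left).insert t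
  have hQt : ∀ q ∈ Q, q ≤ t := by
    rintro q (rfl | ⟨-, hq⟩)
    · exact le_rfl
    · exact le_of_lt hq
  have hcontd : ∀ ω, Continuous fun u : ℝ≥0 => Metric.infDist (M u ω) (mybarrier x l) :=
    fun ω => (Metric.continuous_infDist_pt _).comp (hcont ω)
  have key : {ω | ∃ s ≤ t, M s ω ∈ mybarrier x l} =
      ⋂ k : ℕ, ⋃ q ∈ Q, {ω | Metric.infDist (M q ω) (mybarrier x l) < ((k : ℝ) + 1)⁻¹} := by
    ext ω
    simp only [mem_setOf_eq, mem_iInter, mem_iUnion, exists_prop]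
    constructor
    · rintro ⟨s, hst, hs⟩
      intro k
      have h0 : Metric.infDist (M s ω) (mybarrier x l) = 0 := Metric.infDist_zero_of_mem hs
      have hkpos : (0 : ℝ) < ((k : ℝ) + 1)⁻¹ := by positivity
      rcases eq_or_lt_of_le hst with h | h
      · refine ⟨t, mem_insert _ _, ?_⟩
        show Metric.infDist (M t ω) (mybarrier x l) < ((k : ℝ) + 1)⁻¹
        rw [← h, h0]; exact hkpos
      · have hU : IsOpen ({u : ℝ≥0 | Metric.infDist (M u ω) (mybarrier x l) < ((k : ℝ) + 1)⁻¹}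
            ∩ Iio t) := ((isOpen_lt (hcontd ω) continuous_const)).inter isOpen_Iio
        have hsU : s ∈ ({u : ℝ≥0 | Metric.infDist (M u ω) (mybarrier x l) < ((k : ℝ) + 1)⁻¹}
            ∩ Iio t) := ⟨by simpa [h0] using hkpos, h⟩
        obtain ⟨q, hqD, hq⟩ := hDd.exists_mem_open hU ⟨s, hsU⟩
        exact ⟨q, mem_insert_iff.2 (Or.inr ⟨hqD, hq.2⟩), hq.1⟩
    · intro h
      choose q hqQ hqd using h
      have hqt : ∀ k, q k ∈ Iic t := fun k => hQt _ (hqQ k)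
      have hcpt : IsCompact (Iic t : Set ℝ≥0) := by rw [← Icc_bot]; exact isCompact_Icc
      obtain ⟨s, hst, φ, hφ, hconv⟩ := hcpt.tendsto_subseq hqt
      refine ⟨s, hst, ?_⟩
      have hd : Tendsto (fun k => Metric.infDist (M (q (φ k)) ω) (mybarrier x l)) atTop
          (𝓝 (Metric.infDist (M s ω) (mybarrier x l))) := ((hcontd ω).tendsto s).comp hconv
      have hz : Tendsto (fun k => Metric.infDist (M (q (φ k)) ω) (mybarrier x l)) atTop
          (𝓝 0) := by
        have hb : ∀ k : ℕ, Metric.infDist (M (q (φ k)) ω) (mybarrier x l) ≤ ((k : ℝ) + 1)⁻¹ := by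
          intro k
          refine (hqd (φ k)).le.trans (inv_anti₀ (by positivity) ?_)
          have h2 : (k : ℝ) ≤ (φ k : ℝ) := Nat.cast_le.2 hφ.le_apply
          linarith
        refine squeeze_zero (fun k => Metric.infDist_nonneg) hb ?_
        exact tendsto_one_div_add_atTop_nhds_zero_nat.congr fun k => by rw [one_div]
      have h0 : Metric.infDist (M s ω) (mybarrier x l) = 0 := tendsto_nhds_unique hd hz
      exact ((mybarrier_closed x l).mem_iff_infDist_zero (mybarrier_nonempty x l)).2 h0
  rw [key]
  refine MeasurableSet.iInter fun k => ?_
  refine MeasurableSet.biUnion hQc fun q hq => ?_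
  have hMq : Measurable[F t] (M q) := ((hadp q).mono (F.mono (hQt q hq))).measurable
  exact measurableSet_lt ((Metric.continuous_infDist_pt _).measurable.comp hMq) measurable_const

lemma myrho_isStoppingTime (hadp : StronglyAdapted F M) (hcont : ∀ ω, Continuous fun t => M t ω) :
    IsStoppingTime F (fun ω => (myrho M x l T ω : WithTop ℝ≥0)) := by
  intro t
  simp only [WithTop.coe_le_coe]
  by_cases hTt : T ≤ t
  · have huniv : {ω | myrho M x l T ω ≤ t} = univ :=
      eq_univ_of_forall fun ω => myrho_le.trans hTt
    rw [huniv]; exact MeasurableSet.univ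
  · push_neg at hTt
    have hset : {ω | myrho M x l T ω ≤ t} = {ω | ∃ s ≤ t, M s ω ∈ mybarrier x l} := by
      ext ω
      simp only [mem_setOf_eq]
      constructor
      · intro h
        rcases myrho_mem (M := M) (x := x) (l := l) (T := T) (ω := ω) (hcont ω) with hmem | hmem
        · exact ⟨myrho M x l T ω, h, hmem.1⟩
        · rw [mem_singleton_iff] at hmem
          rw [hmem] at h
          exact absurd hTt (not_lt.2 h)
      · rintro ⟨s, hst, hs⟩
        exact le_trans (csInf_le (OrderBot.bddBelow _)
          (mem_union_left _ ⟨hs, hst.trans hTt.le⟩)) hst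
    rw [hset]
    exact measurable_hit_event hadp hcont t
end

section
variable {Ω : Type*} {mΩ : MeasurableSpace Ω} {P : Measure Ω} [IsProbabilityMeasure P]
  {F : Filtration ℝ≥0 mΩ} {M : ℝ≥0 → Ω → ℝ} {x l : ℝ} {T : ℝ≥0} {ω : Ω}

/-- dyadic upper approximation of `myrho` -/
noncomputable def mysig (M : ℝ≥0 → Ω → ℝ) (x l : ℝ) (T : ℝ≥0) (n : ℕ) (ω : Ω) : ℝ≥0 :=
  (⌈myrho M x l T ω * 2 ^ n⌉₊ : ℝ≥0) / 2 ^ n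

lemma two_pow_ne (n : ℕ) : ((2 : ℝ≥0) ^ n) ≠ 0 := by positivity

lemma myrho_le_mysig (n : ℕ) : myrho M x l T ω ≤ mysig M x l T n ω := by
  rw [mysig, le_div_iff₀ (pos_iff_ne_zero.2 (two_pow_ne n))]
  exact Nat.le_ceil _

lemma mysig_le (n : ℕ) : mysig M x l T n ω ≤ myrho M x l T ω + ((2 : ℝ≥0) ^ n)⁻¹ := by
  rw [mysig, div_le_iff₀ (pos_iff_ne_zero.2 (two_pow_ne n)), add_mul,
    inv_mul_cancel₀ (two_pow_ne n)]
  exact (Nat.ceil_lt_add_one (by positivity)).le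

lemma mysig_le_horizon (n : ℕ) : mysig M x l T n ω ≤ T + 1 := by
  refine (mysig_le n).trans (add_le_add myrho_le ?_)
  rw [inv_le_one₀ (a := (2:ℝ≥0)^n) (by positivity)]
  exact one_le_pow₀ one_le_two

lemma mysig_isStoppingTime (hadp : StronglyAdapted F M) (hcont : ∀ ω, Continuous fun t => M t ω)
    (n : ℕ) : IsStoppingTime F (fun ω => (mysig M x l T n ω : WithTop ℝ≥0)) := by
  intro t
  simp only [WithTop.coe_le_coe]
  set u : ℝ≥0 := (⌊t * 2 ^ n⌋₊ : ℝ≥0) / 2 ^ n with hu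
  have hut : u ≤ t := by
    rw [hu, div_le_iff₀ (pos_iff_ne_zero.2 (two_pow_ne n))]
    exact Nat.floor_le (by positivity)
  have hset : {ω | mysig M x l T n ω ≤ t} = {ω | myrho M x l T ω ≤ u} := by
    ext ω
    simp only [mem_setOf_eq, mysig, hu]
    rw [div_le_iff₀ (pos_iff_ne_zero.2 (two_pow_ne n)), le_div_iff₀ (pos_iff_ne_zero.2 (two_pow_ne n))]
    constructor
    · intro h
      have h1 : ⌈myrho M x l T ω * 2 ^ n⌉₊ ≤ ⌊t * 2 ^ n⌋₊ := Nat.le_floor h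
      exact (Nat.le_ceil _).trans (Nat.cast_le.2 h1)
    · intro h
      have h1 : ⌈myrho M x l T ω * 2 ^ n⌉₊ ≤ ⌊t * 2 ^ n⌋₊ := by
        rw [Nat.ceil_le]; exact h
      exact (Nat.cast_le.2 h1).trans (Nat.floor_le (by positivity))
  rw [hset]
  have hρu := myrho_isStoppingTime (x := x) (l := l) (T := T) hadp hcont u
  simp only [WithTop.coe_le_coe] at hρu
  exact F.mono hut _ hρu

lemma mysig_tendsto (n : ℕ) : Tendsto (fun n => mysig M x l T n ω) atTop (𝓝 (myrho M x l T ω)) := by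
  rw [← NNReal.tendsto_coe]
  have h1 : Tendsto (fun n : ℕ => ((myrho M x l T ω : ℝ) + (2 : ℝ)⁻¹ ^ n)) atTop
      (𝓝 ((myrho M x l T ω : ℝ) + 0)) := by
    refine tendsto_const_nhds.add ?_
    exact tendsto_pow_atTop_nhds_zero_of_lt_one (by norm_num) (by norm_num)
  rw [add_zero] at h1
  refine tendsto_of_tendsto_of_tendsto_of_le_of_le tendsto_const_nhds h1 ?_ ?_
  · exact fun n => NNReal.coe_le_coe.2 (myrho_le_mysig n)
  · intro n
    have := mysig_le (M := M) (x := x) (l := l) (T := T) (ω := ω) n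
    have h2 := NNReal.coe_le_coe.2 this
    rw [NNReal.coe_add] at h2
    refine h2.trans ?_
    simp [inv_pow]
end

section
variable {Ω : Type*} {mΩ : MeasurableSpace Ω} {P : Measure Ω} [IsProbabilityMeasure P]
  {F : Filtration ℝ≥0 mΩ} {M : ℝ≥0 → Ω → ℝ} {x l : ℝ} {T : ℝ≥0}

lemma integral_myrho_stopped (hmart : Martingale M F P)
    (hcont : ∀ ω, Continuous fun t => M t ω) (hM0 : ∀ᵐ ω ∂P, M 0 ω = 0)
    (hx : 0 < x) (hl : 0 < l) (T : ℝ≥0) :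
    ∫ ω, stoppedValue M (fun ω => (myrho M x l T ω : WithTop ℝ≥0)) ω ∂P = 0 := by
  have hρ : IsStoppingTime F (fun ω => (myrho M x l T ω : WithTop ℝ≥0)) := myrho_isStoppingTime hmart.stronglyAdapted hcont
  set N : ℝ≥0 := T + 1 with hN
  have hσst : ∀ n, IsStoppingTime F (fun ω => (mysig M x l T n ω : WithTop ℝ≥0)) :=
    mysig_isStoppingTime hmart.stronglyAdapted hcont
  have hσle : ∀ n, ∀ ω, (mysig M x l T n ω : WithTop ℝ≥0) ≤ N := fun n ω =>
    WithTop.coe_le_coe.2 (mysig_le_horizon n)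
  have hprog : ProgMeasurable F M := hmart.stronglyAdapted.progMeasurable_of_continuous hcont
  -- optional sampling at each dyadic approximation
  have hsamp : ∀ n : ℕ, stoppedValue M (fun ω => (mysig M x l T n ω : WithTop ℝ≥0)) =ᵐ[P]
      P[M N | ((hσst n).measurableSpace)] := by
    intro n
    have hcr : (Set.range (fun ω => (mysig M x l T n ω : WithTop ℝ≥0))).Countable := by
      refine (countable_range fun k : ℕ => ((((k : ℝ≥0) / 2 ^ n : ℝ≥0)) : WithTop ℝ≥0)).mono ?_
      rintro - ⟨ω, rfl⟩
      exact ⟨⌈myrho M x l T ω * 2 ^ n⌉₊, rfl⟩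
    exact hmart.stoppedValue_ae_eq_condExp_of_le_const_of_countable_range (hσst n)
      (hσle n) hcr
  have hint : ∀ n, ∫ ω, stoppedValue M (fun ω => (mysig M x l T n ω : WithTop ℝ≥0)) ω ∂P = ∫ ω, M N ω ∂P := by
    intro n
    rw [integral_congr_ae (hsamp n)]
    exact integral_condExp ((hσst n).measurableSpace_le)
  have hMN0 : ∫ ω, M N ω ∂P = 0 := by
    have h1 : ∫ ω in univ, M 0 ω ∂P = ∫ ω in univ, M N ω ∂P :=
      hmart.setIntegral_eq (by positivity : (0 : ℝ≥0) ≤ N) (MeasurableSet.univ (m := F 0))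
    rw [setIntegral_univ, setIntegral_univ] at h1
    rw [← h1]
    exact integral_eq_zero_of_ae hM0
  -- Vitali convergence
  have hgmeas : Measurable (stoppedValue M (fun ω => (myrho M x l T ω : WithTop ℝ≥0))) :=
    (measurable_stoppedValue hprog hρ).mono hρ.measurableSpace_le le_rfl
  have hbound : ∀ᵐ ω ∂P, ‖stoppedValue M (fun ω => (myrho M x l T ω : WithTop ℝ≥0)) ω‖ ≤ max x l := by
    filter_upwards [hM0] with ω h0
    have := myrho_val_mem (T := T) (hcont ω) h0 hx hl
    rw [Real.norm_eq_abs, abs_le]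
    constructor
    · calc -(max x l) ≤ -x := by simp
        _ ≤ _ := this.1
    · exact this.2.trans (le_max_right x l)
  have hgmem : MemLp (stoppedValue M (fun ω => (myrho M x l T ω : WithTop ℝ≥0))) 1 P :=
    MemLp.of_bound hgmeas.aestronglyMeasurable (max x l) hbound
  have hfaesm : ∀ n, AEStronglyMeasurable (stoppedValue M (fun ω => (mysig M x l T n ω : WithTop ℝ≥0))) P := fun n =>
    ((measurable_stoppedValue hprog (hσst n)).mono (hσst n).measurableSpace_le
      le_rfl).aestronglyMeasurable
  have hui : UnifIntegrable (fun n => stoppedValue M (fun ω => (mysig M x l T n ω : WithTop ℝ≥0))) 1 P := by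
    have h2 := ((hmart.integrable N).uniformIntegrable_condExp
      (fun n : ℕ => (hσst n).measurableSpace_le)).2.1
    exact h2.ae_eq fun n => (hsamp n).symm
  have hae : ∀ ω, Tendsto (fun n => stoppedValue M (fun ω => (mysig M x l T n ω : WithTop ℝ≥0)) ω) atTop
      (𝓝 (stoppedValue M (fun ω => (myrho M x l T ω : WithTop ℝ≥0)) ω)) := by
    intro ω
    exact ((hcont ω).tendsto _).comp (mysig_tendsto 0)
  have hLp := tendsto_Lp_finite_of_tendsto_ae le_rfl ENNReal.one_ne_top hfaesm hgmem hui
    (Eventually.of_forall hae)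
  have hItend : Tendsto (fun n => ∫ ω, stoppedValue M (fun ω => (mysig M x l T n ω : WithTop ℝ≥0)) ω ∂P) atTop
      (𝓝 (∫ ω, stoppedValue M (fun ω => (myrho M x l T ω : WithTop ℝ≥0)) ω ∂P)) := by
    refine tendsto_integral_of_L1 _ (memLp_one_iff_integrable.1 hgmem).1
      (Eventually.of_forall fun n => (integrable_condExp).congr (hsamp n).symm) ?_
    have : ∀ n : ℕ, (∫⁻ ω, ‖stoppedValue M (fun ω => (mysig M x l T n ω : WithTop ℝ≥0)) ω -
        stoppedValue M (fun ω => (myrho M x l T ω : WithTop ℝ≥0)) ω‖ₑ ∂P) =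
        eLpNorm (stoppedValue M (fun ω => (mysig M x l T n ω : WithTop ℝ≥0)) - stoppedValue M (fun ω => (myrho M x l T ω : WithTop ℝ≥0))) 1 P := by
      intro n
      rw [eLpNorm_one_eq_lintegral_enorm]
      rfl
    simp_rw [this]
    exact hLp
  have hconst : Tendsto (fun _ : ℕ => (0 : ℝ)) atTop (𝓝 (0 : ℝ)) := tendsto_const_nhds
  have : (fun n : ℕ => ∫ ω, stoppedValue M (fun ω => (mysig M x l T n ω : WithTop ℝ≥0)) ω ∂P) = fun _ : ℕ => (0 : ℝ) := by
    funext n; rw [hint n, hMN0]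
  rw [this] at hItend
  exact tendsto_nhds_unique hItend hconst
end

section
variable {Ω : Type*} {mΩ : MeasurableSpace Ω} {P : Measure Ω} [IsProbabilityMeasure P]
  {F : Filtration ℝ≥0 mΩ} {M : ℝ≥0 → Ω → ℝ} {Minf : Ω → ℝ} {x l : ℝ} {ω : Ω}

/-- limit of the stopped values -/
noncomputable def myZ (M : ℝ≥0 → Ω → ℝ) (Minf : Ω → ℝ) (x l : ℝ) (ω : Ω) : ℝ :=
  if h : ∃ t, M t ω ∈ mybarrier x l then M (sInf {t | M t ω ∈ mybarrier x l}) ω else Minf ω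

lemma ereal_lim_le_iSup (hconv : Tendsto (fun t => M t ω) atTop (𝓝 (Minf ω))) :
    ((Minf ω : ℝ) : EReal) ≤ ⨆ t : ℝ≥0, ((M t ω : ℝ) : EReal) := by
  have h1 : Tendsto (fun t : ℝ≥0 => ((M t ω : ℝ) : EReal)) atTop (𝓝 ((Minf ω : ℝ) : EReal)) :=
    (continuous_coe_real_ereal.tendsto _).comp hconv
  rw [← h1.limsup_eq]
  exact limsup_le_iSup

lemma myZ_tendsto (hω : Continuous fun t => M t ω)
    (hconv : Tendsto (fun t => M t ω) atTop (𝓝 (Minf ω))) :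
    Tendsto (fun m : ℕ => stoppedValue M (fun ω => (myrho M x l (m : ℝ≥0) ω : WithTop ℝ≥0)) ω) atTop
      (𝓝 (myZ M Minf x l ω)) := by
  by_cases h : ∃ t, M t ω ∈ mybarrier x l
  · set τ₀ := sInf {t | M t ω ∈ mybarrier x l} with hτ₀
    have hcl : IsClosed {t : ℝ≥0 | M t ω ∈ mybarrier x l} := (mybarrier_closed x l).preimage hω
    have hτmem : τ₀ ∈ {t : ℝ≥0 | M t ω ∈ mybarrier x l} :=
      hcl.csInf_mem h (OrderBot.bddBelow _)
    have heq : ∀ m : ℕ, τ₀ ≤ (m : ℝ≥0) → myrho M x l (m : ℝ≥0) ω = τ₀ := by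
      intro m hm
      refine le_antisymm (csInf_le (OrderBot.bddBelow _) (mem_union_left _ ⟨hτmem, hm⟩)) ?_
      refine le_csInf ⟨(m : ℝ≥0), mem_union_right _ rfl⟩ ?_
      rintro b (⟨hb, -⟩ | rfl)
      · exact csInf_le (OrderBot.bddBelow _) hb
      · exact hm
    have hev : ∀ᶠ m : ℕ in atTop, stoppedValue M (fun ω => (myrho M x l (m : ℝ≥0) ω : WithTop ℝ≥0)) ω = myZ M Minf x l ω := by
      rw [eventually_atTop]
      refine ⟨⌈(τ₀ : ℝ)⌉₊, fun m hm => ?_⟩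
      have hτm : τ₀ ≤ (m : ℝ≥0) := by
        rw [← NNReal.coe_le_coe]
        push_cast
        exact (Nat.le_ceil _).trans (Nat.cast_le.2 hm)
      rw [stoppedValue, heq m hτm, myZ, dif_pos h]; rfl
    exact tendsto_const_nhds.congr' (hev.mono fun m hm => hm.symm)
  · have heq : ∀ m : ℕ, myrho M x l (m : ℝ≥0) ω = (m : ℝ≥0) := by
      intro m
      have hempty : {t : ℝ≥0 | M t ω ∈ mybarrier x l} ∩ Iic (m : ℝ≥0) ∪ {(m : ℝ≥0)} =
          {(m : ℝ≥0)} := by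
        have : {t : ℝ≥0 | M t ω ∈ mybarrier x l} = ∅ := by
          rw [eq_empty_iff_forall_notMem]
          exact fun t ht => h ⟨t, ht⟩
        rw [this, empty_inter, empty_union]
      rw [myrho, hempty, csInf_singleton]
    have : (fun m : ℕ => stoppedValue M (fun ω => (myrho M x l (m : ℝ≥0) ω : WithTop ℝ≥0)) ω) =
        fun m : ℕ => M (m : ℝ≥0) ω := by
      funext m; rw [stoppedValue, heq m]; rfl
    rw [this, myZ, dif_neg h]
    exact hconv.comp tendsto_natCast_atTop_atTop

lemma myZ_props (hω : Continuous fun t => M t ω) (h0 : M 0 ω = 0)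
    (hconv : Tendsto (fun t => M t ω) atTop (𝓝 (Minf ω))) (hx : 0 < x) (hl : 0 < l) :
    myZ M Minf x l ω ∈ Icc (-x) l ∧
    (myZ M Minf x l ω = -x ∨ myZ M Minf x l ω = l ∨ myZ M Minf x l ω = Minf ω) ∧
    (myZ M Minf x l ω = l → (l : EReal) ≤ ⨆ t : ℝ≥0, ((M t ω : ℝ) : EReal)) := by
  by_cases h : ∃ t, M t ω ∈ mybarrier x l
  · set τ₀ := sInf {t : ℝ≥0 | M t ω ∈ mybarrier x l} with hτ₀
    have hcl : IsClosed {t : ℝ≥0 | M t ω ∈ mybarrier x l} := (mybarrier_closed x l).preimage hω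
    have hτmem : τ₀ ∈ {t : ℝ≥0 | M t ω ∈ mybarrier x l} :=
      hcl.csInf_mem h (OrderBot.bddBelow _)
    have hZval : myZ M Minf x l ω = M τ₀ ω := by rw [myZ, dif_pos h]
    -- τ₀ equals myrho at a large horizon, so value is in Icc
    have hρ : myrho M x l (⌈(τ₀ : ℝ)⌉₊ : ℝ≥0) ω = τ₀ := by
      refine le_antisymm (csInf_le (OrderBot.bddBelow _) (mem_union_left _
        ⟨hτmem, ?_⟩)) ?_
      · have h2 : (τ₀ : ℝ) ≤ ((⌈(τ₀ : ℝ)⌉₊ : ℝ≥0) : ℝ) := by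
          push_cast; exact Nat.le_ceil _
        exact_mod_cast h2
      · refine le_csInf ⟨_, mem_union_right _ rfl⟩ ?_
        rintro b (⟨hb, -⟩ | rfl)
        · exact csInf_le (OrderBot.bddBelow _) hb
        · have h2 : (τ₀ : ℝ) ≤ ((⌈(τ₀ : ℝ)⌉₊ : ℝ≥0) : ℝ) := by
            push_cast; exact Nat.le_ceil _
          exact_mod_cast h2
    have hIcc : M τ₀ ω ∈ Icc (-x) l := by
      have := myrho_val_mem (T := (⌈(τ₀ : ℝ)⌉₊ : ℝ≥0)) hω h0 hx hl
      rwa [hρ] at this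
    refine ⟨hZval ▸ hIcc, ?_, ?_⟩
    · rcases hτmem with hle | hge
      · exact Or.inl (by rw [hZval]; exact le_antisymm hle hIcc.1)
      · exact Or.inr (Or.inl (by rw [hZval]; exact le_antisymm hIcc.2 hge))
    · intro hZl
      rw [hZval] at hZl
      rw [← hZl]
      exact le_iSup (fun t : ℝ≥0 => ((M t ω : ℝ) : EReal)) τ₀
  · have hZval : myZ M Minf x l ω = Minf ω := by rw [myZ, dif_neg h]
    have hIcc : Minf ω ∈ Icc (-x) l := by
      refine isClosed_Icc.mem_of_tendsto hconv (Eventually.of_forall fun t => ?_)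
      have ht : M t ω ∉ mybarrier x l := fun hmem => h ⟨t, hmem⟩
      have := not_mem_mybarrier.1 ht
      exact ⟨this.1.le, this.2.le⟩
    refine ⟨hZval ▸ hIcc, Or.inr (Or.inr hZval), fun hZl => ?_⟩
    rw [← hZl, hZval]
    exact ereal_lim_le_iSup hconv
end

section
variable {Ω : Type*} {mΩ : MeasurableSpace Ω} {P : Measure Ω} [IsProbabilityMeasure P]
  {F : Filtration ℝ≥0 mΩ} {M : ℝ≥0 → Ω → ℝ} {Minf : Ω → ℝ} {x l : ℝ}

lemma myZ_integral (hmart : Martingale M F P) (hcont : ∀ ω, Continuous fun t => M t ω)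
    (hM0 : ∀ᵐ ω ∂P, M 0 ω = 0)
    (hconv : ∀ᵐ ω ∂P, Tendsto (fun t => M t ω) atTop (𝓝 (Minf ω)))
    (hx : 0 < x) (hl : 0 < l) :
    Integrable (myZ M Minf x l) P ∧ ∫ ω, myZ M Minf x l ω ∂P = 0 := by
  have hprog : ProgMeasurable F M := hmart.stronglyAdapted.progMeasurable_of_continuous hcont
  have hmeas : ∀ m : ℕ, AEStronglyMeasurable
      (fun ω => stoppedValue M (fun ω => (myrho M x l (m : ℝ≥0) ω : WithTop ℝ≥0)) ω) P := by
    intro m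
    exact ((measurable_stoppedValue hprog (myrho_isStoppingTime hmart.stronglyAdapted hcont)).mono
      (myrho_isStoppingTime hmart.stronglyAdapted hcont).measurableSpace_le
      le_rfl).aestronglyMeasurable
  have htend : ∀ᵐ ω ∂P, Tendsto (fun m : ℕ => stoppedValue M (fun ω => (myrho M x l (m : ℝ≥0) ω : WithTop ℝ≥0)) ω) atTop
      (𝓝 (myZ M Minf x l ω)) := by
    filter_upwards [hconv] with ω h using myZ_tendsto (hcont ω) h
  have hZaesm : AEStronglyMeasurable (myZ M Minf x l) P :=
    aestronglyMeasurable_of_tendsto_ae atTop hmeas htend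
  have hbound : ∀ m : ℕ, ∀ᵐ ω ∂P, ‖stoppedValue M (fun ω => (myrho M x l (m : ℝ≥0) ω : WithTop ℝ≥0)) ω‖ ≤ max x l := by
    intro m
    filter_upwards [hM0] with ω h0
    have h2 := myrho_val_mem (T := (m : ℝ≥0)) (hcont ω) h0 hx hl
    rw [Real.norm_eq_abs, abs_le]
    refine ⟨?_, h2.2.trans (le_max_right x l)⟩
    calc -(max x l) ≤ -x := by simp
      _ ≤ _ := h2.1
  have hItend : Tendsto (fun m : ℕ => ∫ ω, stoppedValue M (fun ω => (myrho M x l (m : ℝ≥0) ω : WithTop ℝ≥0)) ω ∂P) atTop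
      (𝓝 (∫ ω, myZ M Minf x l ω ∂P)) :=
    tendsto_integral_of_dominated_convergence (fun _ => max x l) hmeas
      (integrable_const _) hbound htend
  have hzero : (fun m : ℕ => ∫ ω, stoppedValue M (fun ω => (myrho M x l (m : ℝ≥0) ω : WithTop ℝ≥0)) ω ∂P) =
      fun _ : ℕ => (0 : ℝ) := by
    funext m
    exact integral_myrho_stopped hmart hcont hM0 hx hl (m : ℝ≥0)
  rw [hzero] at hItend
  have hI0 : ∫ ω, myZ M Minf x l ω ∂P = 0 := tendsto_nhds_unique hItend tendsto_const_nhds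
  refine ⟨?_, hI0⟩
  refine (integrable_const (max x l)).mono' hZaesm ?_
  filter_upwards [hM0, hconv] with ω h0 hc
  have h2 := (myZ_props (hcont ω) h0 hc hx hl).1
  rw [Real.norm_eq_abs, abs_le]
  refine ⟨?_, h2.2.trans (le_max_right x l)⟩
  calc -(max x l) ≤ -x := by simp
    _ ≤ _ := h2.1
end

section
variable {μ : Measure ℝ} [IsProbabilityMeasure μ] {x l : ℝ}

lemma integrable_on_of_bound {s : Set ℝ} {f : ℝ → ℝ} (C : ℝ) (hf : Measurable f)
    (hs : MeasurableSet s) (h : ∀ y ∈ s, ‖f y‖ ≤ C) : Integrable f (μ.restrict s) := by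
  refine (integrable_const C).mono' hf.aestronglyMeasurable ?_
  filter_upwards [ae_restrict_mem hs] with y hy using h y hy

lemma cfun_payoff (hx : 0 < x) (hl : 0 < l) :
    ∫ y, max (min y l + x) 0 ∂μ = cfun μ l + x - cfun μ (-x) := by
  have hmin_meas : Measurable fun y : ℝ => min y l := measurable_id.min measurable_const
  have hg_meas : Measurable fun y : ℝ => max (min y l + x) 0 :=
    (hmin_meas.add_const x).max measurable_const
  have hg_int : Integrable (fun y => max (min y l + x) 0) μ := by
    refine (integrable_const (l + x)).mono' hg_meas.aestronglyMeasurable ?_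
    refine ae_of_all _ fun y => ?_
    rw [Real.norm_eq_abs, abs_le]
    constructor
    · calc -(l + x) ≤ 0 := by linarith
        _ ≤ _ := le_max_right _ _
    · exact max_le (by simp [min_le_right y l]) (by linarith)
  have hsplit : ∫ y in Ici (0:ℝ), max (min y l + x) 0 ∂μ +
      ∫ y in Iio (0:ℝ), max (min y l + x) 0 ∂μ = ∫ y, max (min y l + x) 0 ∂μ := by
    have := integral_add_compl (measurableSet_Ici (a := (0:ℝ))) hg_int
    rwa [compl_Ici] at this
  -- right piece
  have hright : ∫ y in Ici (0:ℝ), max (min y l + x) 0 ∂μ =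
      cfun μ l + x * (μ (Ici 0)).toReal := by
    have h1 : ∫ y in Ici (0:ℝ), max (min y l + x) 0 ∂μ =
        ∫ y in Ici (0:ℝ), (min y l + x) ∂μ := by
      refine setIntegral_congr_fun measurableSet_Ici fun y hy => ?_
      have : (0:ℝ) ≤ min y l := le_min hy hl.le
      exact max_eq_left (by linarith)
    have h2 : Integrable (fun y => min y l) (μ.restrict (Ici 0)) := by
      refine integrable_on_of_bound (|l| + |x| + 1) hmin_meas measurableSet_Ici fun y hy => ?_
      rw [Real.norm_eq_abs, abs_le]
      have h3 : (0:ℝ) ≤ min y l := le_min hy hl.le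
      have h4 : min y l ≤ l := min_le_right y l
      have := abs_nonneg x
      constructor <;> [skip; skip] <;> cases abs_cases l <;> cases abs_cases x <;> linarith
    have h5 : ∫ y in Ici (0:ℝ), (min y l + x) ∂μ =
        (∫ y in Ici (0:ℝ), min y l ∂μ) + ∫ y in Ici (0:ℝ), (x:ℝ) ∂μ :=
      integral_add h2 (integrable_const x)
    have h6 : cfun μ l = ∫ y in Ici (0:ℝ), min y l ∂μ := by
      rw [cfun, if_pos hl.le]
      exact integral_congr_ae (ae_of_all _ fun y => min_comm l y)
    rw [h1, h5, ← h6, setIntegral_const, smul_eq_mul, mul_comm, Measure.real_def]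
  -- left piece
  have hleft : ∫ y in Iio (0:ℝ), max (min y l + x) 0 ∂μ =
      x * (μ (Iio 0)).toReal - cfun μ (-x) := by
    have h1 : ∫ y in Iio (0:ℝ), max (min y l + x) 0 ∂μ =
        ∫ y in Iio (0:ℝ), (x - min x (-y)) ∂μ := by
      refine setIntegral_congr_fun measurableSet_Iio fun y hy => ?_
      have hy0 : y < 0 := hy
      have hmin : min y l = y := min_eq_left (by linarith)
      rw [hmin]
      rcases le_or_gt (-y) x with h | h
      · rw [min_eq_right h, max_eq_left (by linarith)]; ring
      · rw [min_eq_left h.le, max_eq_right (by linarith)]; ring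
    have h2 : Integrable (fun y => min x (-y)) (μ.restrict (Iio 0)) := by
      refine integrable_on_of_bound (|x|) (measurable_const.min measurable_id.neg)
        measurableSet_Iio fun y hy => ?_
      have hy0 : y < 0 := hy
      rw [Real.norm_eq_abs, abs_le]
      have h3 : (0:ℝ) ≤ min x (-y) := le_min hx.le (by linarith)
      have h4 : min x (-y) ≤ x := min_le_left _ _
      cases abs_cases x <;> constructor <;> linarith
    have h5 : ∫ y in Iio (0:ℝ), (x - min x (-y)) ∂μ =
        (∫ y in Iio (0:ℝ), (x:ℝ) ∂μ) - ∫ y in Iio (0:ℝ), min x (-y) ∂μ :=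
      integral_sub (integrable_const x) h2
    have h6 : cfun μ (-x) = ∫ y in Iio (0:ℝ), min x (-y) ∂μ := by
      rw [cfun, if_neg (by linarith)]
      refine setIntegral_congr_fun measurableSet_Iio fun y hy => ?_
      have hy0 : y < 0 := hy
      rw [abs_neg, abs_of_pos hx, abs_of_neg hy0]
    rw [h1, h5, ← h6, setIntegral_const, smul_eq_mul, mul_comm, Measure.real_def]
  have hone : (μ (Ici (0:ℝ))).toReal + (μ (Iio (0:ℝ))).toReal = 1 := by
    have h1 : μ (Ici (0:ℝ)) + μ (Iio (0:ℝ)) = 1 := by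
      have h0 : μ (Ici (0:ℝ) ∪ Iio 0) = μ (Ici (0:ℝ)) + μ (Iio (0:ℝ)) := measure_union
        (disjoint_left.2 fun a ha hb => absurd (mem_Ici.1 ha) (not_le.2 (mem_Iio.1 hb))) measurableSet_Iio
      rw [union_comm, Iio_union_Ici, measure_univ] at h0
      exact h0.symm
    have h2 : μ (Ici (0:ℝ)) ≠ ⊤ := measure_ne_top μ _
    have h3 : μ (Iio (0:ℝ)) ≠ ⊤ := measure_ne_top μ _
    rw [← ENNReal.toReal_add h2 h3, h1, ENNReal.toReal_one]
  rw [← hsplit, hright, hleft]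
  nlinarith [hone]
end

section
variable {Ω : Type*} {mΩ : MeasurableSpace Ω} {P : Measure Ω} [IsProbabilityMeasure P]
  {F : Filtration ℝ≥0 mΩ} {M : ℝ≥0 → Ω → ℝ} {Minf : Ω → ℝ} {x l : ℝ}

lemma easyPlus (ν : Measure ℝ) [IsProbabilityMeasure ν]
    (hconv : ∀ᵐ ω ∂P, Tendsto (fun t => M t ω) atTop (𝓝 (Minf ω)))
    (hMmeas : Measurable Minf) (hlaw : P.map Minf = ν) (l : ℝ) :
    (ν (Ici l)).toReal ≤
      (P {ω | (l : EReal) ≤ ⨆ t : ℝ≥0, ((M t ω : ℝ) : EReal)}).toReal := by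
  have hsub : Minf ⁻¹' (Ici l) ≤ᵐ[P] {ω | (l : EReal) ≤ ⨆ t : ℝ≥0, ((M t ω : ℝ) : EReal)} := by
    filter_upwards [hconv] with ω hc hmem
    have h1 : ((l : ℝ) : EReal) ≤ ((Minf ω : ℝ) : EReal) := EReal.coe_le_coe_iff.2 hmem
    exact le_trans h1 (ereal_lim_le_iSup hc)
  have h2 : ν (Ici l) = P (Minf ⁻¹' (Ici l)) := by
    rw [← hlaw, Measure.map_apply hMmeas measurableSet_Ici]
  rw [h2]
  exact ENNReal.toReal_mono (measure_ne_top P _) (measure_mono_ae hsub)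

lemma keyPlus (ν : Measure ℝ) [IsProbabilityMeasure ν] (hmart : Martingale M F P)
    (hcont : ∀ ω, Continuous fun t => M t ω) (hM0 : ∀ᵐ ω ∂P, M 0 ω = 0)
    (hconv : ∀ᵐ ω ∂P, Tendsto (fun t => M t ω) atTop (𝓝 (Minf ω)))
    (hMmeas : Measurable Minf) (hlaw : P.map Minf = ν) (hl : 0 < l) (hx : 0 < x) :
    (ν (Ici l)).toReal - slopePlus ν l x ≤
      (P {ω | (l : EReal) ≤ ⨆ t : ℝ≥0, ((M t ω : ℝ) : EReal)}).toReal := by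
  obtain ⟨hZint, hZ0⟩ := myZ_integral hmart hcont hM0 hconv hx hl
  set A := {ω | (l : EReal) ≤ ⨆ t : ℝ≥0, ((M t ω : ℝ) : EReal)} with hA
  set Z' := hZint.1.mk (myZ M Minf x l) with hZ'
  have hZ'meas : StronglyMeasurable Z' := hZint.1.stronglyMeasurable_mk
  have hZeq : myZ M Minf x l =ᵐ[P] Z' := hZint.1.ae_eq_mk
  set B := {ω | Z' ω = l} ∪ Minf ⁻¹' (Ici l) with hB
  have hBmeas : MeasurableSet B :=
    (hZ'meas.measurable (measurableSet_singleton l)).union (hMmeas measurableSet_Ici)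
  -- B is a.e. contained in A
  have hBsubA : B ≤ᵐ[P] A := by
    filter_upwards [hconv, hM0, hZeq] with ω hc h0 hZw hmem
    have hprops := myZ_props (hcont ω) h0 hc hx hl
    rcases hmem with hZl | hMl
    · exact hprops.2.2 (hZw.trans hZl)
    · exact le_trans (EReal.coe_le_coe_iff.2 hMl) (ereal_lim_le_iSup hc)
  -- pointwise inequality
  have hptwise : ∀ᵐ ω ∂P,
      myZ M Minf x l ω + x - max (min (Minf ω) l + x) 0 +
        (Minf ⁻¹' (Ici l)).indicator (fun _ => l + x) ω ≤
      B.indicator (fun _ => l + x) ω := by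
    filter_upwards [hconv, hM0, hZeq] with ω hc h0 hZw
    obtain ⟨hIcc, hcases, -⟩ := myZ_props (hcont ω) h0 hc hx hl
    by_cases hmem : ω ∈ B
    · rw [indicator_of_mem hmem]
      by_cases hMl : ω ∈ Minf ⁻¹' (Ici l)
      · rw [indicator_of_mem hMl]
        have hminl : min (Minf ω) l = l := min_eq_right hMl
        rw [hminl, max_eq_left (by linarith)]
        linarith [hIcc.2]
      · rw [indicator_of_notMem hMl]
        have := le_max_right (min (Minf ω) l + x) 0
        linarith [hIcc.2]
    · rw [indicator_of_notMem hmem]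
      have hMl : Minf ω < l := by
        by_contra hcon
        exact hmem (Or.inr (mem_Ici.2 (not_lt.1 hcon)))
      rw [indicator_of_notMem (by simpa using not_le.2 hMl)]
      have hZne : myZ M Minf x l ω ≠ l := fun hh => hmem (Or.inl (show Z' ω = l from hZw.symm.trans hh))
      rcases hcases with hZx | hZl | hZM
      · rw [hZx]
        have := le_max_right (min (Minf ω) l + x) 0
        linarith
      · exact absurd hZl hZne
      · rw [hZM]
        have hminM : min (Minf ω) l = Minf ω := min_eq_left hMl.le
        have h5 := le_max_left (min (Minf ω) l + x) 0
        linarith [hminM]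
  -- integrability of all pieces
  have hf2meas : Measurable fun ω => max (min (Minf ω) l + x) 0 :=
    (((hMmeas.min measurable_const).add_const x).max measurable_const)
  have hf2int : Integrable (fun ω => max (min (Minf ω) l + x) 0) P := by
    refine (integrable_const (l + x)).mono' hf2meas.aestronglyMeasurable ?_
    refine ae_of_all _ fun ω => ?_
    rw [Real.norm_eq_abs, abs_le]
    constructor
    · calc -(l + x) ≤ 0 := by linarith
        _ ≤ _ := le_max_right _ _
    · exact max_le (by simp [min_le_right (Minf ω) l]) (by linarith)
  have hf3int : Integrable ((Minf ⁻¹' (Ici l)).indicator (fun _ => l + x) : Ω → ℝ) P :=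
    (integrable_const (l + x)).indicator (hMmeas measurableSet_Ici)
  have hf4int : Integrable (B.indicator (fun _ => l + x) : Ω → ℝ) P :=
    (integrable_const (l + x)).indicator hBmeas
  have hsum1 : Integrable (fun ω => myZ M Minf x l ω + x) P := hZint.add (integrable_const x)
  have hsum2 : Integrable (fun ω => myZ M Minf x l ω + x - max (min (Minf ω) l + x) 0) P :=
    hsum1.sub hf2int
  have hLHSint : Integrable (fun ω =>
      myZ M Minf x l ω + x - max (min (Minf ω) l + x) 0 +
        (Minf ⁻¹' (Ici l)).indicator (fun _ => l + x) ω) P :=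
    hsum2.add hf3int
  have hineq := integral_mono_ae hLHSint hf4int hptwise
  -- compute both sides
  have hI4 : ∫ ω, B.indicator (fun _ => l + x) ω ∂P = (P B).toReal * (l + x) := by
    rw [integral_indicator hBmeas, setIntegral_const, smul_eq_mul, Measure.real_def]
  have hI3 : ∫ ω, (Minf ⁻¹' (Ici l)).indicator (fun _ => l + x) ω ∂P =
      (ν (Ici l)).toReal * (l + x) := by
    rw [integral_indicator (hMmeas measurableSet_Ici), setIntegral_const, smul_eq_mul, Measure.real_def]
    congr 2
    rw [← hlaw, Measure.map_apply hMmeas measurableSet_Ici]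
  have hI2 : ∫ ω, max (min (Minf ω) l + x) 0 ∂P = cfun ν l + x - cfun ν (-x) := by
    have h1 : ∫ ω, max (min (Minf ω) l + x) 0 ∂P = ∫ y, max (min y l + x) 0 ∂ν := by
      rw [← hlaw, integral_map hMmeas.aemeasurable]
      exact (((measurable_id.min measurable_const).add_const x).max
        measurable_const).aestronglyMeasurable
    rw [h1]
    exact cfun_payoff hx hl
  have hIL : ∫ ω, (myZ M Minf x l ω + x - max (min (Minf ω) l + x) 0 +
      (Minf ⁻¹' (Ici l)).indicator (fun _ => l + x) ω) ∂P =
      x - (cfun ν l + x - cfun ν (-x)) + (ν (Ici l)).toReal * (l + x) := by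
    rw [integral_add hsum2 hf3int, integral_sub hsum1 hf2int,
      integral_add hZint (integrable_const x), hZ0, hI2, hI3, integral_const]
    simp
  rw [hIL, hI4] at hineq
  -- P B ≤ P A
  have hPBA : (P B).toReal ≤ (P A).toReal :=
    ENNReal.toReal_mono (measure_ne_top P _) (measure_mono_ae hBsubA)
  have hlx : (0:ℝ) < l + x := by linarith
  have hmain : x - (cfun ν l + x - cfun ν (-x)) + (ν (Ici l)).toReal * (l + x) ≤
      (P A).toReal * (l + x) := by
    refine hineq.trans ?_
    exact mul_le_mul_of_nonneg_right hPBA hlx.le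
  have h7 : ((ν (Ici l)).toReal - (P A).toReal) * (l + x) ≤ cfun ν l - cfun ν (-x) := by
    nlinarith [hmain]
  have h8 : (ν (Ici l)).toReal - (P A).toReal ≤ (cfun ν l - cfun ν (-x)) / (l + x) :=
    (le_div_iff₀ hlx).2 h7
  rw [slopePlus]
  linarith [h8]
end

lemma myEReal_neg_iInf {ι : Sort*} (f : ι → EReal) : (⨆ i, -f i) = -⨅ i, f i := by
  apply le_antisymm
  · exact iSup_le fun i => EReal.neg_le_neg_iff.2 (iInf_le f i)
  · rw [EReal.neg_le]
    refine le_iInf fun i => ?_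
    rw [EReal.neg_le]
    exact le_iSup (fun i => -f i) i

section
variable {μ : Measure ℝ} [IsProbabilityMeasure μ]

lemma neg_preimage_Ici (a : ℝ) : (fun z : ℝ => -z) ⁻¹' (Ici a) = Iic (-a) := by
  ext z; simp [le_neg]

lemma neg_preimage_Iio (a : ℝ) : (fun z : ℝ => -z) ⁻¹' (Iio a) = Ioi (-a) := by
  ext z; simp [lt_neg]

lemma cfun_map_neg_pos (h0 : μ {0} = 0) {y : ℝ} (hy : 0 < y) :
    cfun (μ.map fun z : ℝ => -z) y = cfun μ (-y) := by
  rw [cfun, if_pos hy.le,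
    setIntegral_map (f := fun u : ℝ => min y u) measurableSet_Ici
      (by exact (measurable_const.min measurable_id).aestronglyMeasurable)
      measurable_neg.aemeasurable]
  have hpre : (fun z : ℝ => -z) ⁻¹' (Ici 0) = Iic 0 := by rw [neg_preimage_Ici, neg_zero]
  rw [hpre, setIntegral_congr_set (Iio_ae_eq_Iic' h0).symm, cfun, if_neg (by linarith)]
  refine setIntegral_congr_fun measurableSet_Iio fun u hu => ?_
  have hu0 : u < 0 := hu
  rw [abs_neg, abs_of_pos hy, abs_of_neg hu0]

lemma cfun_map_neg_neg (h0 : μ {0} = 0) {y : ℝ} (hy : 0 < y) :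
    cfun (μ.map fun z : ℝ => -z) (-y) = cfun μ y := by
  rw [cfun, if_neg (by linarith)]
  have h1 : ∫ u in Iio (0:ℝ), min |(-y)| |u| ∂(μ.map fun z : ℝ => -z) =
      ∫ u in Iio (0:ℝ), min y (-u) ∂(μ.map fun z : ℝ => -z) := by
    refine setIntegral_congr_fun measurableSet_Iio fun u hu => ?_
    have hu0 : u < 0 := hu
    rw [abs_neg, abs_of_pos hy, abs_of_neg hu0]
  rw [h1, setIntegral_map (f := fun u : ℝ => min y (-u)) measurableSet_Iio
    (by exact (measurable_const.min measurable_neg).aestronglyMeasurable)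
    measurable_neg.aemeasurable]
  have hpre : (fun z : ℝ => -z) ⁻¹' (Iio 0) = Ioi 0 := by rw [neg_preimage_Iio, neg_zero]
  have h2 : ∫ u in (fun z : ℝ => -z) ⁻¹' (Iio 0), min y (-(-u)) ∂μ =
      ∫ u in Ioi (0:ℝ), min y u ∂μ := by
    rw [hpre]
    exact setIntegral_congr_fun measurableSet_Ioi fun u _ => by rw [neg_neg]
  rw [h2, setIntegral_congr_set (Ioi_ae_eq_Ici' h0), cfun, if_pos hy.le]
end

/-- if `M` is a continuous martingale vanishing at `0` which converges a.s.
to a limit `M∞` with law `μ`, then for every `λ > 0`,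
`P(sup_t M_t ≥ λ) ≥ μ₊(λ)` and `P(-inf_t M_t ≥ λ) ≥ μ₋(λ)` (the supremum and infimum of
the path are computed in the extended reals `EReal` to allow unbounded paths). -/
theorem martingale_sup_inf_tail_bounds
    {Ω : Type*} {mΩ : MeasurableSpace Ω} {P : Measure Ω} [IsProbabilityMeasure P]
    {F : Filtration ℝ≥0 mΩ} {M : ℝ≥0 → Ω → ℝ} {Minf : Ω → ℝ}
    (μ : Measure ℝ) [IsProbabilityMeasure μ] (h0 : μ {0} = 0)
    (hmart : Martingale M F P)
    (hcont : ∀ ω, Continuous fun t => M t ω)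
    (hM0 : ∀ᵐ ω ∂P, M 0 ω = 0)
    (hconv : ∀ᵐ ω ∂P, Tendsto (fun t => M t ω) atTop (nhds (Minf ω)))
    (hlaw : P.map Minf = μ) :

    ∀ l : ℝ, 0 < l →
      muPlus μ l ≤ (P {ω | (l : EReal) ≤ ⨆ t : ℝ≥0, ((M t ω : ℝ) : EReal)}).toReal ∧
      muMinus μ l ≤ (P {ω | (l : EReal) ≤ -⨅ t : ℝ≥0, ((M t ω : ℝ) : EReal)}).toReal := by
  intro l hl
  have hMaem : AEMeasurable Minf P := by
    by_contra hna
    rw [Measure.map_of_not_aemeasurable hna] at hlaw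
    have h1 : μ univ = 1 := measure_univ
    rw [← hlaw] at h1
    simp at h1
  set N := hMaem.mk Minf with hNdef
  have hNmeas : Measurable N := hMaem.measurable_mk
  have hNae : Minf =ᵐ[P] N := hMaem.ae_eq_mk
  have hconvN : ∀ᵐ ω ∂P, Tendsto (fun t => M t ω) atTop (𝓝 (N ω)) := by
    filter_upwards [hconv, hNae] with ω h1 h2
    rwa [h2] at h1
  have hlawN : P.map N = μ := (Measure.map_congr hNae).symm.trans hlaw
  constructor
  · -- the plus bound
    simp only [muPlus, thetaPlus]
    by_cases hne : (argminPlus μ l).Nonempty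
    · rw [if_pos hne]
      obtain ⟨x₀, hx₀pos, hx₀min⟩ := hne
      have himg : slopePlus μ l x₀ ∈ slopePlus μ l '' Ioi 0 := ⟨x₀, hx₀pos, rfl⟩
      have hlb : ∀ y ∈ slopePlus μ l '' Ioi 0, slopePlus μ l x₀ ≤ y := by
        rintro - ⟨y, hy, rfl⟩
        exact hx₀min y hy
      have hsInf : sInf (slopePlus μ l '' Ioi 0) = slopePlus μ l x₀ :=
        le_antisymm (csInf_le ⟨_, hlb⟩ himg) (le_csInf ⟨_, himg⟩ hlb)
      rw [hsInf]
      have hk := keyPlus μ hmart hcont hM0 hconvN hNmeas hlawN hl hx₀pos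
      linarith
    · rw [if_neg hne]
      have he := easyPlus μ hconvN hNmeas hlawN l
      linarith
  · -- the minus bound
    set ν : Measure ℝ := μ.map (fun z : ℝ => -z) with hν
    haveI : IsProbabilityMeasure ν := Measure.isProbabilityMeasure_map measurable_neg.aemeasurable
    have hmart' : Martingale (fun t ω => -(M t ω)) F P := hmart.neg
    have hcont' : ∀ ω, Continuous fun t => -(M t ω) := fun ω => (hcont ω).neg
    have hM0' : ∀ᵐ ω ∂P, -(M 0 ω) = 0 := by
      filter_upwards [hM0] with ω h
      rw [h, neg_zero]
    have hconv' : ∀ᵐ ω ∂P, Tendsto (fun t => -(M t ω)) atTop (𝓝 (-(N ω))) := by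
      filter_upwards [hconvN] with ω h using h.neg
    have hNmeas' : Measurable fun ω => -(N ω) := hNmeas.neg
    have hlaw' : P.map (fun ω => -(N ω)) = ν := by
      rw [hν, ← hlawN]
      exact (Measure.map_map measurable_neg hNmeas).symm
    have hset : {ω | (l : EReal) ≤ ⨆ t : ℝ≥0, ((-(M t ω) : ℝ) : EReal)} =
        {ω | (l : EReal) ≤ -⨅ t : ℝ≥0, ((M t ω : ℝ) : EReal)} := by
      ext ω
      simp only [mem_setOf_eq, EReal.coe_neg]
      rw [myEReal_neg_iInf (fun t : ℝ≥0 => ((M t ω : ℝ) : EReal))]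
    have hνIci : ν (Ici l) = μ (Iic (-l)) := by
      rw [hν, Measure.map_apply measurable_neg measurableSet_Ici, neg_preimage_Ici]
    have hslope : ∀ z : ℝ, 0 < z → slopePlus ν l z = -slopeMinus μ l z := by
      intro z hz
      rw [slopePlus, slopeMinus, hν, cfun_map_neg_pos h0 hl, cfun_map_neg_neg h0 hz,
        add_comm l z, ← neg_sub, neg_div]
    simp only [muMinus, thetaMinus]
    by_cases hne : (argmaxMinus μ l).Nonempty
    · rw [if_pos hne]
      obtain ⟨x₀, hx₀pos, hx₀max⟩ := hne
      have himg : slopeMinus μ l x₀ ∈ slopeMinus μ l '' Ioi 0 := ⟨x₀, hx₀pos, rfl⟩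
      have hub : ∀ y ∈ slopeMinus μ l '' Ioi 0, y ≤ slopeMinus μ l x₀ := by
        rintro - ⟨y, hy, rfl⟩
        exact hx₀max y hy
      have hsSup : sSup (slopeMinus μ l '' Ioi 0) = slopeMinus μ l x₀ :=
        le_antisymm (csSup_le ⟨_, himg⟩ hub) (le_csSup ⟨_, hub⟩ himg)
      rw [hsSup]
      have hk := keyPlus (M := fun t ω => -(M t ω)) ν hmart' hcont' hM0' hconv' hNmeas'
        hlaw' hl hx₀pos
      rw [hset, hνIci, hslope x₀ hx₀pos] at hk
      linarith
    · rw [if_neg hne]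
      have he := easyPlus (M := fun t ω => -(M t ω)) ν hconv' hNmeas' hlaw' l
      rw [hset, hνIci] at he
      linarith
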